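/- arXiv:1907.06271 — 2 statements merged into one kernel-verified Lean document; each statement's English description precedes it below -/
import Mathlib

section
/- Let (X,d) be a δ-hyperbolic geodesic metric space and let A ≥ 0. If x, y, z, w ∈ X are such that (x,z)_y ≤ A, (y,w)_z ≤ A, and d(y,z) > 10δ + 2A, then for any geodesic segments [x,y], [y,z], [z,w] the concatenated path [x,y] ∪ [y,z] ∪ [z,w] is a (1, 4δ + 4A)-quasigeodesic; explicitly, for any two points p, q on the concatenation, the length of the subpath of the concatenation between p and q is at most d(p,q) + 4δ + 4A. -/
open Set

/-- The Gromov product of `x` and `y` relative to `z`: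
`(x,y)_z = ½(d(x,z) + d(y,z) − d(x,y))`. -/
noncomputable def gprod {X : Type*} [MetricSpace X] (x y z : X) : ℝ :=
  (dist x z + dist y z - dist x y) / 2

/-- `f` parametrizes a geodesic segment from `x` to `y` by arc length on `[0, dist x y]`. -/
def IsGeodSeg {X : Type*} [MetricSpace X] (f : ℝ → X) (x y : X) : Prop :=
  f 0 = x ∧ f (dist x y) = y ∧
    ∀ s ∈ Set.Icc (0 : ℝ) (dist x y), ∀ t ∈ Set.Icc (0 : ℝ) (dist x y),
      dist (f s) (f t) = |s - t|

/-- `X` is a geodesic metric space: any two points are joined by a geodesic segment. -/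
def GeodMetricSpace (X : Type*) [MetricSpace X] : Prop :=
  ∀ x y : X, ∃ f : ℝ → X, IsGeodSeg f x y

/-- `X` is `δ`-hyperbolic: for any `x, y, z`, any geodesics `[z,x]` and `[z,y]`, and any
points `x' ∈ [z,x]`, `y' ∈ [z,y]` with `d(z,x') = d(z,y') = s ≤ (x,y)_z`, one has
`d(x',y') ≤ δ`. -/
def DeltaHyp (X : Type*) [MetricSpace X] (δ : ℝ) : Prop :=
  ∀ (x y z : X) (f g : ℝ → X), IsGeodSeg f z x → IsGeodSeg g z y →
    ∀ s : ℝ, 0 ≤ s → s ≤ dist z x → s ≤ dist z y → s ≤ gprod x y z →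
      dist (f s) (g s) ≤ δ

section Aux
variable {X : Type*} [MetricSpace X]

lemma geod_dist_left {f : ℝ → X} {o x : X} (hf : IsGeodSeg f o x)
    {r : ℝ} (h0 : 0 ≤ r) (h1 : r ≤ dist o x) : dist o (f r) = r := by
  have h := hf.2.2 0 ⟨le_refl 0, dist_nonneg⟩ r ⟨h0, h1⟩
  rw [hf.1] at h
  rw [h, zero_sub, abs_neg, abs_of_nonneg h0]

lemma geod_dist_right {f : ℝ → X} {o x : X} (hf : IsGeodSeg f o x)
    {r : ℝ} (h0 : 0 ≤ r) (h1 : r ≤ dist o x) : dist (f r) x = dist o x - r := by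
  have h := hf.2.2 r ⟨h0, h1⟩ (dist o x) ⟨dist_nonneg, le_refl _⟩
  rw [hf.2.1] at h
  rw [h, abs_of_nonpos (by linarith), neg_sub]

lemma geod_restrict {f : ℝ → X} {o x : X} (hf : IsGeodSeg f o x)
    {r : ℝ} (h0 : 0 ≤ r) (h1 : r ≤ dist o x) : IsGeodSeg f o (f r) := by
  have hd : dist o (f r) = r := geod_dist_left hf h0 h1
  refine ⟨hf.1, by rw [hd], ?_⟩
  intro s hs t ht
  rw [hd] at hs ht
  exact hf.2.2 s ⟨hs.1, hs.2.trans h1⟩ t ⟨ht.1, ht.2.trans h1⟩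

lemma geod_reverse {g : ℝ → X} {y z : X} (hg : IsGeodSeg g y z) :
    IsGeodSeg (fun τ => g (dist y z - τ)) z y := by
  have hzy : dist z y = dist y z := dist_comm z y
  refine ⟨by simp [hg.2.1], by simp [hzy, hg.1], ?_⟩
  intro s hs t ht
  rw [hzy] at hs ht
  have h := hg.2.2 (dist y z - s) ⟨by linarith [hs.2], by linarith [hs.1]⟩
    (dist y z - t) ⟨by linarith [ht.2], by linarith [ht.1]⟩
  have h2 : (dist y z - s) - (dist y z - t) = t - s := by ring
  simp only []
  rw [h, h2, abs_sub_comm]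

lemma gprod_nonneg (p q o : X) : 0 ≤ gprod p q o := by
  have h := dist_triangle p o q
  have h2 : dist o q = dist q o := dist_comm o q
  unfold gprod; linarith

lemma gprod_le_left (p q o : X) : gprod p q o ≤ dist p o := by
  have h := dist_triangle q p o
  have h2 : dist q p = dist p q := dist_comm q p
  unfold gprod; linarith

lemma gprod_le_right (p q o : X) : gprod p q o ≤ dist q o := by
  have h := dist_triangle p q o
  unfold gprod; linarith

lemma near_lemma {δ A : ℝ} (hhyp : DeltaHyp X δ)
    {o x1 x2 : X} {f1 f2 : ℝ → X}
    (hf1 : IsGeodSeg f1 o x1) (hf2 : IsGeodSeg f2 o x2)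
    (hgp : gprod x1 x2 o ≤ A)
    {r u : ℝ} (hr0 : 0 ≤ r) (hr1 : r ≤ dist o x1)
    (hu0 : 0 ≤ u) (hu1 : u ≤ dist o x2) :
    r + u ≤ dist (f1 r) (f2 u) + (2 * A + δ) := by
  have hop : dist o (f1 r) = r := geod_dist_left hf1 hr0 hr1
  have hoq : dist o (f2 u) = u := geod_dist_left hf2 hu0 hu1
  set m := gprod (f1 r) (f2 u) o with hm
  have hm0 : 0 ≤ m := gprod_nonneg _ _ _
  have hmr : m ≤ r := by
    have h := gprod_le_left (f1 r) (f2 u) o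
    rw [dist_comm (f1 r) o, hop] at h; rw [hm]; exact h
  have hmu : m ≤ u := by
    have h := gprod_le_right (f1 r) (f2 u) o
    rw [dist_comm (f2 u) o, hoq] at h; rw [hm]; exact h
  have hthin : dist (f1 m) (f2 m) ≤ δ :=
    hhyp (f1 r) (f2 u) o f1 f2 (geod_restrict hf1 hr0 hr1) (geod_restrict hf2 hu0 hu1)
      m hm0 (by rw [hop]; exact hmr) (by rw [hoq]; exact hmu) (by rw [← hm])
  have h1 : dist (f1 m) x1 = dist o x1 - m := geod_dist_right hf1 hm0 (hmr.trans hr1)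
  have h2 : dist (f2 m) x2 = dist o x2 - m := geod_dist_right hf2 hm0 (hmu.trans hu1)
  have hx12 : dist x1 x2 ≤ (dist o x1 - m) + δ + (dist o x2 - m) := by
    calc dist x1 x2 ≤ dist x1 (f1 m) + dist (f1 m) x2 := dist_triangle _ _ _
      _ ≤ dist x1 (f1 m) + (dist (f1 m) (f2 m) + dist (f2 m) x2) := by
          linarith [dist_triangle (f1 m) (f2 m) x2]
      _ ≤ _ := by rw [dist_comm x1 (f1 m), h1]; linarith
  have hgpd : gprod x1 x2 o = (dist x1 o + dist x2 o - dist x1 x2) / 2 := rfl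
  have e1 : dist x1 o = dist o x1 := dist_comm _ _
  have e2 : dist x2 o = dist o x2 := dist_comm _ _
  have hdpq : m = (dist (f1 r) o + dist (f2 u) o - dist (f1 r) (f2 u)) / 2 := hm
  have e3 : dist (f1 r) o = dist o (f1 r) := dist_comm _ _
  have e4 : dist (f2 u) o = dist o (f2 u) := dist_comm _ _
  linarith

lemma far_lemma {δ A : ℝ} (hδ : 0 ≤ δ)
    (hgeo : GeodMetricSpace X) (hhyp : DeltaHyp X δ)
    {o x1 x2 q : X} {f1 f2 : ℝ → X}
    (hf1 : IsGeodSeg f1 o x1) (hf2 : IsGeodSeg f2 o x2)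
    (hgp : gprod x1 x2 o ≤ A)
    (hfar : dist o x2 > 10 * δ + 2 * A)
    (hq : dist o x2 + dist x2 q - 2 * A - δ ≤ dist o q)
    {r : ℝ} (hr0 : 0 ≤ r) (hr1 : r ≤ dist o x1) :
    r + dist o q ≤ dist (f1 r) q + (2 * A + 2 * δ) := by
  obtain ⟨k, hk⟩ := hgeo o q
  have hop : dist o (f1 r) = r := geod_dist_left hf1 hr0 hr1
  set m := gprod (f1 r) q o with hmdef
  set n := gprod x2 q o with hndef
  have hm0 : 0 ≤ m := gprod_nonneg _ _ _
  have hmr : m ≤ r := by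
    have h := gprod_le_left (f1 r) q o
    rw [dist_comm (f1 r) o, hop] at h; rw [hmdef]; exact h
  have hmq : m ≤ dist o q := by
    have h := gprod_le_right (f1 r) q o
    rw [dist_comm q o] at h; rw [hmdef]; exact h
  have hn2 : n ≤ dist o x2 := by
    have h := gprod_le_left x2 q o
    rw [dist_comm x2 o] at h; rw [hndef]; exact h
  have hnq : n ≤ dist o q := by
    have h := gprod_le_right x2 q o
    rw [dist_comm q o] at h; rw [hndef]; exact h
  have hndval : n = (dist x2 o + dist q o - dist x2 q) / 2 := hndef
  have e1 : dist x2 o = dist o x2 := dist_comm _ _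
  have e2 : dist q o = dist o q := dist_comm _ _
  have hnlow : dist o x2 - A - δ / 2 ≤ n := by linarith
  have key : m ≤ A + δ := by
    by_contra hcon
    push_neg at hcon
    set s0 := min m n with hs0
    have hs0m : s0 ≤ m := min_le_left _ _
    have hs0n : s0 ≤ n := min_le_right _ _
    have hs0pos : A + δ < s0 := lt_min hcon (by linarith)
    have hs00 : 0 ≤ s0 := by nlinarith [hδ]
    have ht1 : dist (f1 s0) (k s0) ≤ δ :=
      hhyp (f1 r) q o f1 k (geod_restrict hf1 hr0 hr1) hk s0 hs00
        (by rw [hop]; linarith) (by linarith) (by rw [← hmdef]; exact hs0m)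
    have ht2 : dist (f2 s0) (k s0) ≤ δ :=
      hhyp x2 q o f2 k hf2 hk s0 hs00 (by linarith) (by linarith)
        (by rw [← hndef]; exact hs0n)
    have h1 : dist (f1 s0) x1 = dist o x1 - s0 := geod_dist_right hf1 hs00 (by linarith)
    have h2 : dist (f2 s0) x2 = dist o x2 - s0 := geod_dist_right hf2 hs00 (by linarith)
    have hx12 : dist x1 x2 ≤ (dist o x1 - s0) + 2 * δ + (dist o x2 - s0) := by
      calc dist x1 x2 ≤ dist x1 (f1 s0) + dist (f1 s0) x2 := dist_triangle _ _ _
        _ ≤ dist x1 (f1 s0) + (dist (f1 s0) (k s0) + dist (k s0) x2) := by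
            linarith [dist_triangle (f1 s0) (k s0) x2]
        _ ≤ dist x1 (f1 s0) +
            (dist (f1 s0) (k s0) + (dist (k s0) (f2 s0) + dist (f2 s0) x2)) := by
            linarith [dist_triangle (k s0) (f2 s0) x2]
        _ ≤ _ := by
            rw [dist_comm x1 (f1 s0), h1, dist_comm (k s0) (f2 s0)]
            linarith
    have hgpd : gprod x1 x2 o = (dist x1 o + dist x2 o - dist x1 x2) / 2 := rfl
    have e3 : dist x1 o = dist o x1 := dist_comm _ _
    linarith
  have hdpq : m = (dist (f1 r) o + dist q o - dist (f1 r) q) / 2 := hmdef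
  have e5 : dist (f1 r) o = dist o (f1 r) := dist_comm _ _
  linarith

end Aux

lemma main_half {X : Type*} [MetricSpace X] (δ A : ℝ) (hδ : 0 ≤ δ) (hA : 0 ≤ A)
    (hgeo : GeodMetricSpace X) (hhyp : DeltaHyp X δ)
    (x y z w : X) (f g h : ℝ → X)
    (hf : IsGeodSeg f x y) (hg : IsGeodSeg g y z) (hh : IsGeodSeg h z w)
    (hxz : gprod x z y ≤ A) (hyw : gprod y w z ≤ A)
    (hyz : dist y z > 10 * δ + 2 * A)
    (c : ℝ → X)
    (hc : ∀ s : ℝ, c s =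
      if s ≤ dist x y then f s
      else if s ≤ dist x y + dist y z then g (s - dist x y)
      else h (s - dist x y - dist y z))
    (s t : ℝ) (hs : s ∈ Set.Icc (0 : ℝ) (dist x y + dist y z + dist z w))
    (ht : t ∈ Set.Icc (0 : ℝ) (dist x y + dist y z + dist z w))
    (hst : s ≤ t) :
    t - s ≤ dist (c s) (c t) + (4 * δ + 4 * A) := by
  obtain ⟨hs0, hs2⟩ := hs
  obtain ⟨ht0, ht2⟩ := ht
  have ea : dist y x = dist x y := dist_comm y x
  have ezy : dist z y = dist y z := dist_comm z y
  have hf' : IsGeodSeg (fun τ => f (dist x y - τ)) y x := geod_reverse hf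
  have hg' : IsGeodSeg (fun τ => g (dist y z - τ)) z y := geod_reverse hg
  by_cases hsa : s ≤ dist x y
  · by_cases hta : t ≤ dist x y
    · -- both on f
      have hd : dist (f s) (f t) = |s - t| := hf.2.2 s ⟨hs0, hsa⟩ t ⟨hs0.trans hst, hta⟩
      rw [hc s, if_pos hsa, hc t, if_pos hta, hd, abs_of_nonpos (by linarith), neg_sub]
      linarith
    · push_neg at hta
      by_cases htab : t ≤ dist x y + dist y z
      · -- f and g
        have key := near_lemma hhyp hf' hg hxz (r := dist x y - s) (u := t - dist x y)
          (by linarith) (by rw [ea]; linarith) (by linarith) (by linarith)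
        have hfp : dist x y - (dist x y - s) = s := by ring
        rw [hfp] at key
        rw [hc s, if_pos hsa, hc t, if_neg (not_le.2 hta), if_pos htab]
        linarith
      · -- f and h
        push_neg at htab
        set v := t - dist x y - dist y z with hv
        have hv0 : 0 ≤ v := by rw [hv]; linarith
        have hv1 : v ≤ dist z w := by rw [hv]; linarith
        have stepA := near_lemma hhyp hg' hh hyw (r := dist y z) (u := v)
          dist_nonneg (by rw [ezy]) hv0 hv1
        rw [sub_self, hg.1] at stepA
        have hzq : dist z (h v) = v := geod_dist_left hh hv0 hv1
        have stepB := far_lemma hδ hgeo hhyp hf' hg hxz (q := h v)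
          hyz (by rw [hzq]; linarith) (r := dist x y - s)
          (by linarith) (by rw [ea]; linarith)
        have hfp : dist x y - (dist x y - s) = s := by ring
        rw [hfp] at stepB
        rw [hc s, if_pos hsa, hc t, if_neg (not_le.2 hta),
          if_neg (not_le.2 htab), ← hv]
        linarith
  · push_neg at hsa
    have hta : ¬ t ≤ dist x y := not_le.2 (hsa.trans_le hst)
    by_cases htab : t ≤ dist x y + dist y z
    · -- both on g
      have hsab : s ≤ dist x y + dist y z := hst.trans htab
      have hd : dist (g (s - dist x y)) (g (t - dist x y)) = |s - t| := by
        have := hg.2.2 (s - dist x y) ⟨by linarith, by linarith⟩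
          (t - dist x y) ⟨by linarith, by linarith⟩
        rw [this]; congr 1; ring
      rw [hc s, if_neg (not_le.2 hsa), if_pos hsab, hc t, if_neg hta, if_pos htab,
        hd, abs_of_nonpos (by linarith), neg_sub]
      linarith
    · push_neg at htab
      by_cases hsab : s ≤ dist x y + dist y z
      · -- g and h
        set v := t - dist x y - dist y z with hv
        have hv0 : 0 ≤ v := by rw [hv]; linarith
        have hv1 : v ≤ dist z w := by rw [hv]; linarith
        have key := near_lemma hhyp hg' hh hyw (r := dist x y + dist y z - s) (u := v)
          (by linarith) (by rw [ezy]; linarith) hv0 hv1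
        have hgp : dist y z - (dist x y + dist y z - s) = s - dist x y := by ring
        rw [hgp] at key
        rw [hc s, if_neg (not_le.2 hsa), if_pos hsab, hc t, if_neg hta,
          if_neg (not_le.2 htab), ← hv]
        linarith
      · -- both on h
        push_neg at hsab
        have hd : dist (h (s - dist x y - dist y z)) (h (t - dist x y - dist y z))
            = |s - t| := by
          have := hh.2.2 (s - dist x y - dist y z) ⟨by linarith, by linarith⟩
            (t - dist x y - dist y z) ⟨by linarith, by linarith⟩
          rw [this]; congr 1; ring
        rw [hc s, if_neg (not_le.2 hsa), if_neg (not_le.2 hsab), hc t, if_neg hta,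
          if_neg (not_le.2 htab), hd, abs_of_nonpos (by linarith), neg_sub]
        linarith

/-- Let `(X,d)` be a `δ`-hyperbolic geodesic metric space and `A ≥ 0`.
If `x, y, z, w ∈ X` satisfy `(x,z)_y ≤ A`, `(y,w)_z ≤ A`, and `d(y,z) > 10δ + 2A`, then
for any geodesic segments `[x,y]`, `[y,z]`, `[z,w]` the arc-length parametrized
concatenation `c` of `[x,y] ∪ [y,z] ∪ [z,w]` is a `(1, 4δ + 4A)`-quasigeodesic: for any
two parameters `s, t`, the length `|s − t|` of the subpath between `c s` and `c t` is at
most `d(c s, c t) + 4δ + 4A`. -/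
theorem stmt2 {X : Type*} [MetricSpace X] (δ A : ℝ) (hδ : 0 ≤ δ) (hA : 0 ≤ A)
    (hgeo : GeodMetricSpace X) (hhyp : DeltaHyp X δ)
    (x y z w : X) (f g h : ℝ → X)
    (hf : IsGeodSeg f x y) (hg : IsGeodSeg g y z) (hh : IsGeodSeg h z w)
    (hxz : gprod x z y ≤ A) (hyw : gprod y w z ≤ A)
    (hyz : dist y z > 10 * δ + 2 * A)
    (c : ℝ → X)
    (hc : ∀ s : ℝ, c s =
      if s ≤ dist x y then f s
      else if s ≤ dist x y + dist y z then g (s - dist x y)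
      else h (s - dist x y - dist y z)) :
    ∀ s ∈ Set.Icc (0 : ℝ) (dist x y + dist y z + dist z w),
    ∀ t ∈ Set.Icc (0 : ℝ) (dist x y + dist y z + dist z w),
      |s - t| ≤ dist (c s) (c t) + (4 * δ + 4 * A) := by
  intro s hs t ht
  rcases le_total s t with hst | hst
  · rw [abs_of_nonpos (by linarith), neg_sub]
    exact main_half δ A hδ hA hgeo hhyp x y z w f g h hf hg hh hxz hyw hyz c hc
      s t hs ht hst
  · rw [abs_of_nonneg (by linarith), dist_comm]
    exact main_half δ A hδ hA hgeo hhyp x y z w f g h hf hg hh hxz hyw hyz c hc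
      t s ht hs hst
end

section
/- Let (X,d) be a δ-hyperbolic geodesic metric space and let x, y, z, w ∈ X. If there exist geodesic segments [x,w] and [y,z] and points a ∈ [x,w], b ∈ [y,z] with d(a,b) ≤ 2δ, then for any geodesic segments [x,y], [y,z], [z,w] the concatenated path [x,y] ∪ [y,z] ∪ [z,w] is a (1, 4δ + 4·d(y,z))-quasigeodesic; explicitly, for any two points p, q on the concatenation, the length of the subpath of the concatenation between p and q is at most d(p,q) + 4δ + 4·d(y,z). -/
open Set

/-- Distances from the endpoints to a point on a geodesic segment. -/
lemma geod_dists {X : Type*} [MetricSpace X] {f : ℝ → X} {x y : X}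
    (h : IsGeodSeg f x y) {s : ℝ} (hs : s ∈ Set.Icc (0:ℝ) (dist x y)) :
    dist x (f s) = s ∧ dist (f s) y = dist x y - s := by
  obtain ⟨h0, h1, hd⟩ := h
  constructor
  · have := hd 0 ⟨le_refl _, dist_nonneg⟩ s hs
    rw [h0] at this
    rw [this, zero_sub, abs_neg, abs_of_nonneg hs.1]
  · have := hd s hs (dist x y) ⟨dist_nonneg, le_refl _⟩
    rw [h1] at this
    rw [this, abs_of_nonpos (by linarith [hs.2] : s - dist x y ≤ 0), neg_sub]

/-- Let `(X,d)` be a `δ`-hyperbolic geodesic metric space and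
`x, y, z, w ∈ X`. If there exist geodesic segments `[x,w]` and `[y,z]` and points
`a ∈ [x,w]`, `b ∈ [y,z]` with `d(a,b) ≤ 2δ`, then for any geodesic segments `[x,y]`,
`[y,z]`, `[z,w]` the arc-length parametrized concatenation `c` of
`[x,y] ∪ [y,z] ∪ [z,w]` is a `(1, 4δ + 4·d(y,z))`-quasigeodesic: for any two parameters
`s, t`, the length `|s − t|` of the subpath between `c s` and `c t` is at most
`d(c s, c t) + 4δ + 4·d(y,z)`. -/
theorem stmt3 {X : Type*} [MetricSpace X] (δ : ℝ) (hδ : 0 ≤ δ)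
    (hgeo : GeodMetricSpace X) (hhyp : DeltaHyp X δ)
    (x y z w : X)
    (hex : ∃ f₄ f₂ : ℝ → X, IsGeodSeg f₄ x w ∧ IsGeodSeg f₂ y z ∧
      ∃ a ∈ f₄ '' Set.Icc (0 : ℝ) (dist x w), ∃ b ∈ f₂ '' Set.Icc (0 : ℝ) (dist y z),
        dist a b ≤ 2 * δ)
    (f g h : ℝ → X)
    (hf : IsGeodSeg f x y) (hg : IsGeodSeg g y z) (hh : IsGeodSeg h z w)
    (c : ℝ → X)
    (hc : ∀ s : ℝ, c s =
      if s ≤ dist x y then f s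
      else if s ≤ dist x y + dist y z then g (s - dist x y)
      else h (s - dist x y - dist y z)) :
    ∀ s ∈ Set.Icc (0 : ℝ) (dist x y + dist y z + dist z w),
    ∀ t ∈ Set.Icc (0 : ℝ) (dist x y + dist y z + dist z w),
      |s - t| ≤ dist (c s) (c t) + (4 * δ + 4 * dist y z) := by
  obtain ⟨f₄, f₂, hf₄, hf₂, a, ⟨α, hα, ha⟩, b, ⟨β, hβ, hb⟩, hab⟩ := hex
  have hBnn : (0:ℝ) ≤ dist y z := dist_nonneg
  -- facts about a and b
  have hadists := geod_dists hf₄ hα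
  have hbdists := geod_dists hf₂ hβ
  rw [ha] at hadists
  rw [hb] at hbdists
  obtain ⟨hxa, haw⟩ := hadists
  obtain ⟨hyb, hbz⟩ := hbdists
  suffices key : ∀ s ∈ Set.Icc (0 : ℝ) (dist x y + dist y z + dist z w),
      ∀ t ∈ Set.Icc (0 : ℝ) (dist x y + dist y z + dist z w), s ≤ t →
      t - s ≤ dist (c s) (c t) + (4 * δ + 4 * dist y z) by
    intro s hs t ht
    rcases le_total s t with h' | h'
    · rw [abs_sub_comm, abs_of_nonneg (by linarith)]
      exact key s hs t ht h'
    · rw [abs_of_nonneg (by linarith), dist_comm]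
      exact key t ht s hs h'
  intro s hs t ht hst
  rcases le_or_gt t (dist x y) with ht1 | ht1
  · -- both on [x,y]
    have hs1 : s ≤ dist x y := le_trans hst ht1
    rw [hc s, hc t, if_pos hs1, if_pos ht1,
      hf.2.2 s ⟨hs.1, hs1⟩ t ⟨ht.1, ht1⟩, abs_sub_comm, abs_of_nonneg (by linarith)]
    linarith
  rcases le_or_gt t (dist x y + dist y z) with ht2 | ht2
  · -- t on [y,z]
    have hct : c t = g (t - dist x y) := by
      rw [hc t, if_neg (not_le.2 ht1), if_pos ht2]
    have htmem : t - dist x y ∈ Set.Icc (0:ℝ) (dist y z) := ⟨by linarith, by linarith⟩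
    obtain ⟨hyq, hqz⟩ := geod_dists hg htmem
    rcases le_or_gt s (dist x y) with hs1 | hs1
    · -- s on [x,y], t on [y,z]
      have hcs : c s = f s := by rw [hc s, if_pos hs1]
      obtain ⟨hxp, hpy⟩ := geod_dists hf ⟨hs.1, hs1⟩
      have tri : dist (f s) y ≤ dist (f s) (g (t - dist x y)) + dist (g (t - dist x y)) y := by
        have := dist_triangle (f s) (g (t - dist x y)) y
        linarith
      rw [hcs, hct]
      rw [dist_comm] at hyq
      linarith [htmem.2]
    · -- both on [y,z]
      have hcs : c s = g (s - dist x y) := by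
        rw [hc s, if_neg (not_le.2 hs1), if_pos (le_trans hst ht2)]
      have hsmem : s - dist x y ∈ Set.Icc (0:ℝ) (dist y z) := ⟨by linarith, by linarith⟩
      rw [hcs, hct, hg.2.2 _ hsmem _ htmem, abs_sub_comm, abs_of_nonneg (by linarith)]
      linarith
  · -- t on [z,w]
    have hct : c t = h (t - dist x y - dist y z) := by
      rw [hc t, if_neg (not_le.2 ht1), if_neg (not_le.2 ht2)]
    have htmem : t - dist x y - dist y z ∈ Set.Icc (0:ℝ) (dist z w) :=
      ⟨by linarith, by linarith [ht.2]⟩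
    obtain ⟨hzq, hqw⟩ := geod_dists hh htmem
    rcases le_or_gt s (dist x y) with hs1 | hs1
    · -- s on [x,y], t on [z,w] : the main case
      have hcs : c s = f s := by rw [hc s, if_pos hs1]
      obtain ⟨hxp, hpy⟩ := geod_dists hf ⟨hs.1, hs1⟩
      rw [hcs, hct]
      have t1 : dist x w ≤ dist x (f s) + dist (f s) (h (t - dist x y - dist y z)) +
          dist (h (t - dist x y - dist y z)) w := by
        have h1 := dist_triangle x (f s) w
        have h2 := dist_triangle (f s) (h (t - dist x y - dist y z)) w
        linarith
      have t2 : dist x b ≤ dist x a + dist a b := dist_triangle x a b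
      have t3 : dist x y ≤ dist x b + dist b y := dist_triangle x b y
      have t4 : dist b w ≤ dist b a + dist a w := dist_triangle b a w
      have t5 : dist z w ≤ dist z b + dist b w := dist_triangle z b w
      have e1 : dist b y = β := by rw [dist_comm]; exact hyb
      have e2 : dist b a = dist a b := dist_comm b a
      have e3 : dist z b = dist y z - β := by rw [dist_comm]; exact hbz
      linarith [hβ.1, hβ.2]
    rcases le_or_gt s (dist x y + dist y z) with hs2 | hs2
    · -- s on [y,z], t on [z,w]
      have hcs : c s = g (s - dist x y) := by
        rw [hc s, if_neg (not_le.2 hs1), if_pos hs2]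
      have hsmem : s - dist x y ∈ Set.Icc (0:ℝ) (dist y z) := ⟨by linarith, by linarith⟩
      obtain ⟨hyp, hpz⟩ := geod_dists hg hsmem
      rw [hcs, hct]
      have tri : dist z (h (t - dist x y - dist y z)) ≤
          dist z (g (s - dist x y)) + dist (g (s - dist x y)) (h (t - dist x y - dist y z)) :=
        dist_triangle _ _ _
      have e1 : dist z (g (s - dist x y)) = dist y z - (s - dist x y) := by
        rw [dist_comm]; exact hpz
      linarith [hsmem.1]
    · -- both on [z,w]
      have hcs : c s = h (s - dist x y - dist y z) := by
        rw [hc s, if_neg (not_le.2 hs1), if_neg (not_le.2 hs2)]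
      have hsmem : s - dist x y - dist y z ∈ Set.Icc (0:ℝ) (dist z w) :=
        ⟨by linarith, by linarith [hs.2]⟩
      rw [hcs, hct, hh.2.2 _ hsmem _ htmem, abs_sub_comm, abs_of_nonneg (by linarith)]
      linarith
end
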